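/- Let F be a field, p a prime, M/F finite Galois, H a Sylow p-subgroup of Gal(M/F) with fixed field K, and L an intermediate field of M/F with [L:F] = p such that M is the normal closure of L over F. Then M = KL, the compositum of K and L. -/

import Mathlib

open scoped TensorProduct
universe u

/-- A finite-dimensional `F`-algebra is *split* if it is a matrix algebra over `F`. -/
def IsSplit (F : Type u) [Field F] (A : Type u) [Ring A] [Algebra F A] : Prop :=
  ∃ n : ℕ, 0 < n ∧ Nonempty (A ≃ₐ[F] Matrix (Fin n) (Fin n) F)

/-- Brauer equivalence of two `F`-algebras. -/
def BrauerEquiv (F : Type u) [Field F] (A B : Type u) [Ring A] [Algebra F A]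
    [Ring B] [Algebra F B] : Prop :=
  ∃ n m : ℕ, 0 < n ∧ 0 < m ∧ Nonempty (Matrix (Fin n) (Fin n) A ≃ₐ[F] Matrix (Fin m) (Fin m) B)

/-- `A` is a finite-dimensional central simple `F`-algebra. -/
def IsCSA (F A : Type u) [Field F] [Ring A] [Algebra F A] : Prop :=
  Algebra.IsCentral F A ∧ IsSimpleRing A ∧ FiniteDimensional F A

/-- The `n`-fold tensor power of an `F`-algebra. -/
abbrev tpow (F : Type u) [Field F] (A : Type u) [Ring A] [Algebra F A] (n : ℕ) : Type u :=
  ⨂[F] _ : Fin n, A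

/-- The Brauer class of `A` is killed by `p`: its `p`-th tensor power is split. -/
def IsPTorsion (F : Type u) [Field F] (A : Type u) [Ring A] [Algebra F A] (p : ℕ) : Prop :=
  IsSplit F (tpow F A p)

/-- The restriction map `Br(F)[p] → Br(E)[p]` along `f : F →+* E` is injective:
two `p`-torsion Brauer classes that agree after scalar extension agree already over `F`. -/
def ResInjP (p : ℕ) (F E : Type u) [Field F] [Field E] (f : F →+* E) : Prop :=
  letI : Algebra F E := f.toAlgebra
  ∀ (A B : Type u) [Ring A] [Algebra F A] [Ring B] [Algebra F B],
    IsCSA F A → IsCSA F B → IsPTorsion F A p → IsPTorsion F B p →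
    BrauerEquiv E (E ⊗[F] A) (E ⊗[F] B) → BrauerEquiv F A B

/-- The restriction map `Br(F) → Br(E)` along `f : F →+* E` is injective. -/
def ResInj (F E : Type u) [Field F] [Field E] (f : F →+* E) : Prop :=
  letI : Algebra F E := f.toAlgebra
  ∀ (A B : Type u) [Ring A] [Algebra F A] [Ring B] [Algebra F B],
    IsCSA F A → IsCSA F B →
    BrauerEquiv E (E ⊗[F] A) (E ⊗[F] B) → BrauerEquiv F A B

/-- `D` is a central division algebra of degree `p` over `K`. -/
def IsCentralDivisionOfDeg (K D : Type u) [Field K] [DivisionRing D] [Algebra K D]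
    (p : ℕ) : Prop :=
  Algebra.IsCentral K D ∧ FiniteDimensional K D ∧ Module.finrank K D = p ^ 2

open IntermediateField Module

section aux
variable {F M : Type*} [Field F] [Field M] [Algebra F M]

lemma gc_fixing' : GaloisConnection
    (OrderDual.toDual ∘ (IntermediateField.fixingSubgroup : IntermediateField F M → Subgroup (M ≃ₐ[F] M)))
    ((IntermediateField.fixedField : Subgroup (M ≃ₐ[F] M) → IntermediateField F M) ∘ OrderDual.toDual) :=
  fun K H => (IntermediateField.le_iff_le H K).symm

lemma fixingSubgroup_sup' (A B : IntermediateField F M) :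
    (A ⊔ B).fixingSubgroup = A.fixingSubgroup ⊓ B.fixingSubgroup :=
  gc_fixing'.l_sup

lemma fixingSubgroup_iSup' {ι : Sort*} (E : ι → IntermediateField F M) :
    (⨆ i, E i).fixingSubgroup = ⨅ i, (E i).fixingSubgroup :=
  gc_fixing'.l_iSup

end aux

/-- If `M/F` is finite Galois, `L` an intermediate field with `[L:F] = p`
whose normal closure is `M`, `H` a Sylow `p`-subgroup of `Gal(M/F)` with fixed field `K`,
then `M = KL`. -/
theorem fixedField_sup_eq_top (p : ℕ) [Fact p.Prime]
    (F M : Type u) [Field F] [Field M] [Algebra F M] [FiniteDimensional F M] [IsGalois F M]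
    (L : IntermediateField F M) (hL : Module.finrank F L = p)
    (hM : normalClosure F L M = ⊤)
    (H : Sylow p (M ≃ₐ[F] M)) :
    IntermediateField.fixedField (H : Subgroup (M ≃ₐ[F] M)) ⊔ L = ⊤ := by
  classical
  have hp := (Fact.out : p.Prime)
  set G := M ≃ₐ[F] M
  -- the permutation representation on L →ₐ[F] M
  let φ : G →* Equiv.Perm (↥L →ₐ[F] M) :=
    { toFun := fun σ => AlgEquiv.arrowCongr (AlgEquiv.refl : ↥L ≃ₐ[F] ↥L) σ
      map_one' := by ext f x; rfl
      map_mul' := by intro σ τ; ext f x; rfl }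
  have hφinj : Function.Injective φ := by
    rw [injective_iff_map_eq_one]
    intro σ hσ
    have hmem : σ ∈ (⊥ : Subgroup G) := by
      rw [← (IntermediateField.fixingSubgroup_top : (⊤ : IntermediateField F M).fixingSubgroup = ⊥), ← hM, normalClosure_def,
        fixingSubgroup_iSup']
      rw [Subgroup.mem_iInf]
      intro f
      rw [IntermediateField.mem_fixingSubgroup_iff]
      rintro x ⟨y, rfl⟩
      exact AlgHom.congr_fun (congrArg (fun e => Equiv.toFun e f) hσ) y
    simpa using hmem
  -- cardinality facts
  have hAS : Algebra.IsSeparable F ↥L := Algebra.isSeparable_tower_bot_of_isSeparable F ↥L M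
  have hcard_homs : Fintype.card (↥L →ₐ[F] M) = p := by
    rw [AlgHom.card_of_splits F ↥L M, hL]
    intro x
    have h1 : minpoly F x = minpoly F (algebraMap ↥L M x) :=
      (minpoly.algebraMap_eq (algebraMap ↥L M).injective x).symm
    rw [h1]
    exact Normal.splits inferInstance _
  have hGdvd : Nat.card G ∣ p.factorial := by
    have := Subgroup.card_dvd_of_injective φ hφinj
    rwa [Nat.card_eq_fintype_card (α := Equiv.Perm (↥L →ₐ[F] M)), Fintype.card_perm,
      hcard_homs] at this
  have hGcard : Nat.card G = p * finrank (↥L) M := by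
    rw [IsGalois.card_aut_eq_finrank, ← hL]
    exact (finrank_mul_finrank F ↥L M).symm
  have hndvd : ¬ p ∣ finrank (↥L) M := by
    intro hdvd
    have h2 : p ^ 2 ∣ Nat.card G := by
      rw [hGcard, pow_two]; exact mul_dvd_mul_left p hdvd
    have h3 : p ^ 2 ∣ p.factorial := h2.trans hGdvd
    have hfac : p.factorial = p * (p - 1).factorial := by
      obtain ⟨q, rfl⟩ : ∃ q, p = q + 1 := ⟨p - 1, (Nat.succ_pred_eq_of_pos hp.pos).symm⟩
      simp [Nat.factorial_succ]
    rw [hfac, pow_two] at h3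
    have h4 : p ∣ (p - 1).factorial :=
      (Nat.mul_dvd_mul_iff_left hp.pos).mp h3
    rw [Nat.Prime.dvd_factorial hp] at h4
    have := hp.one_lt
    omega
  -- the intersection of H with the fixing subgroup of L is trivial
  have hNcard : Nat.card (L.fixingSubgroup) = finrank (↥L) M := by
    exact IsGalois.card_fixingSubgroup_eq_finrank L
  have hinf : (H : Subgroup G) ⊓ L.fixingSubgroup = ⊥ := by
    rw [eq_bot_iff]
    intro g hg
    obtain ⟨hgH, hgN⟩ := hg
    obtain ⟨k, hk⟩ := H.isPGroup' ⟨g, hgH⟩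
    have hord : orderOf g ∣ p ^ k := by
      rw [← Subgroup.orderOf_mk g hgH]
      exact orderOf_dvd_of_pow_eq_one hk
    have hordN : orderOf g ∣ Nat.card (L.fixingSubgroup) := by
      rw [← Subgroup.orderOf_mk g hgN]
      exact orderOf_dvd_natCard _
    have hcop : (p ^ k).Coprime (Nat.card (L.fixingSubgroup)) := by
      apply Nat.Coprime.pow_left
      rw [hp.coprime_iff_not_dvd, hNcard]
      exact hndvd
    have : orderOf g = 1 := Nat.eq_one_of_dvd_coprimes hcop hord hordN
    rw [Subgroup.mem_bot, ← orderOf_eq_one_iff]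
    exact this
  -- conclude via the Galois correspondence
  have key : (IntermediateField.fixedField (H : Subgroup G) ⊔ L).fixingSubgroup = ⊥ := by
    rw [fixingSubgroup_sup', IntermediateField.fixingSubgroup_fixedField, hinf]
  have := congrArg IntermediateField.fixedField key
  rwa [IsGalois.fixedField_fixingSubgroup, ← (IntermediateField.fixingSubgroup_top : (⊤ : IntermediateField F M).fixingSubgroup = ⊥),
    IsGalois.fixedField_fixingSubgroup] at this
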